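/- arXiv:1104.2217 — 2 statements merged into one kernel-verified Lean document; each statement's English description precedes it below -/
import Mathlib

section
/- The matching produced by the men-proposing Gale-Shapley algorithm is woman-pessimal: for every woman w and every stable matching μ, w does not strictly prefer her Gale-Shapley partner to μ(w). -/
namespace GS

/-- The `k` most-preferred elements of `S` according to the rank function `rank`
(lower rank = more preferred); if `S` has at most `k` elements this is all of `S`. -/
def topk {α : Type*} [DecidableEq α] (rank : α → ℕ) (k : ℕ) (S : Finset α) : Finset α :=
  S.filter fun a => (S.filter fun b => rank b < rank a).card < k

/-- An instance of the stable-matching problem with `n` women and `n` men.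
`mpref m w` is the rank man `m` assigns to woman `w` (lower = more preferred),
and `wpref w m` is the rank woman `w` assigns to man `m`. -/
structure Instance (n : ℕ) where
  mpref : Fin n → Fin n → ℕ
  wpref : Fin n → Fin n → ℕ
  mprefInj : ∀ m, Function.Injective (mpref m)
  wprefInj : ∀ w, Function.Injective (wpref w)

variable {n : ℕ}

/-- `prefers p a b` : `a` is strictly preferred to `b` under rank function `p`. -/
def prefers (p : Fin n → ℕ) (a b : Fin n) : Prop := p a < p b

/-- Given the current state `avail m` (the women who have not yet rejected man `m`),
the set of women man `m` proposes to tonight: his most-preferred available woman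
(a singleton, or empty if no woman is available). -/
def proposals (I : Instance n) (avail : Fin n → Finset (Fin n)) (m : Fin n) :
    Finset (Fin n) := topk (I.mpref m) 1 (avail m)

/-- The men proposing to woman `w` tonight. -/
def proposersOf (I : Instance n) (avail : Fin n → Finset (Fin n)) (w : Fin n) :
    Finset (Fin n) := Finset.univ.filter fun m => w ∈ proposals I avail m

/-- The men rejected by woman `w` tonight: all of tonight's proposers except
her most-preferred one. -/
def rejectedBy (I : Instance n) (avail : Fin n → Finset (Fin n)) (w : Fin n) :
    Finset (Fin n) := proposersOf I avail w \ topk (I.wpref w) 1 (proposersOf I avail w)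

/-- One night of the men-proposing Gale-Shapley algorithm. -/
def step (I : Instance n) (avail : Fin n → Finset (Fin n)) :
    Fin n → Finset (Fin n) :=
  fun m => (avail m).filter fun w => m ∉ rejectedBy I avail w

/-- `nights I t m` : the set of women who have not rejected man `m` before night `t`
(initially all women). -/
def nights (I : Instance n) (t : ℕ) : Fin n → Finset (Fin n) :=
  (step I)^[t] (fun _ => Finset.univ)

/-- The algorithm has terminated by night `T`: no man is rejected on night `T`. -/
def Stopped (I : Instance n) (T : ℕ) : Prop := step I (nights I T) = nights I T

/-- On night `T`, each man `m` serenades exactly under the window of `μ m`. -/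
def MatchesAt (I : Instance n) (T : ℕ) (μ : Fin n ≃ Fin n) : Prop :=
  ∀ m, proposals I (nights I T) m = {μ m}

/-- The bijection `μ` (from men to women) is the outcome of the men-proposing
Gale-Shapley algorithm on instance `I`: for some night `T` no rejection occurs and
every man `m` is matched with `μ m`. -/
def IsGSMatching (I : Instance n) (μ : Fin n ≃ Fin n) : Prop :=
  ∃ T, Stopped I T ∧ MatchesAt I T μ

/-- Stability of a matching `μ` (men to women): there is no unmatched pair `(w, m)`
each of whom strictly prefers the other to their partner under `μ`. -/
def Stable (I : Instance n) (μ : Fin n ≃ Fin n) : Prop :=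
  ¬ ∃ m w, μ m ≠ w ∧ I.mpref m w < I.mpref m (μ m) ∧ I.wpref w m < I.wpref w (μ.symm w)

/-- The instance in which the women in `L` replace their true preferences by the
false preference rankings `f`, everyone else being truthful. -/
def liarInstance (I : Instance n) (L : Finset (Fin n))
    (f : Fin n → Fin n → ℕ) (hf : ∀ w, Function.Injective (f w)) : Instance n where
  mpref := I.mpref
  wpref := fun w => if w ∈ L then f w else I.wpref w
  mprefInj := I.mprefInj
  wprefInj := fun w => by split_ifs; exacts [hf w, I.wprefInj w]

end GS

section Aux
open GS

variable {n : ℕ}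

lemma mem_topk_one {α : Type*} [DecidableEq α] (rank : α → ℕ) (S : Finset α) (a : α) :
    a ∈ GS.topk rank 1 S ↔ a ∈ S ∧ ∀ b ∈ S, ¬ rank b < rank a := by
  simp [GS.topk, Nat.lt_one_iff, Finset.card_eq_zero, Finset.filter_eq_empty_iff]

lemma gs_invariant (I : GS.Instance n) (ν : Fin n ≃ Fin n) (hν : Stable I ν) :
    ∀ t m, ν m ∈ nights I t m := by
  intro t
  induction t with
  | zero => intro m; simp [nights]
  | succ t ih =>
    intro m
    have hs : nights I (t + 1) = step I (nights I t) := by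
      rw [nights, Function.iterate_succ_apply', nights]
    rw [hs]
    unfold step
    rw [Finset.mem_filter]
    refine ⟨ih m, fun hrej => ?_⟩
    set w := ν m with hw
    unfold rejectedBy at hrej
    rw [Finset.mem_sdiff] at hrej
    obtain ⟨hprop, hntop⟩ := hrej
    rw [mem_topk_one] at hntop
    push_neg at hntop
    obtain ⟨m', hm', hlt⟩ := hntop hprop
    -- m' is a proposer to w with wpref w m' < wpref w m
    unfold proposersOf at hm'
    rw [Finset.mem_filter] at hm'
    have hpm' : w ∈ proposals I (nights I t) m' := hm'.2
    unfold proposals at hpm'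
    rw [mem_topk_one] at hpm'
    obtain ⟨hwav, hbest⟩ := hpm'
    have hνm' : ν m' ∈ nights I t m' := ih m'
    have hle : ¬ I.mpref m' (ν m') < I.mpref m' w := hbest _ hνm'
    have hne : m' ≠ m := by
      intro h; rw [h] at hlt; exact lt_irrefl _ hlt
    have hνne : ν m' ≠ w := fun h => hne (ν.injective (h.trans hw))
    have hmlt : I.mpref m' w < I.mpref m' (ν m') := by
      rcases lt_or_eq_of_le (not_lt.mp hle) with h | h
      · exact h
      · exact absurd (I.mprefInj m' h.symm) hνne
    exact hν ⟨m', w, hνne, hmlt, by rwa [hw, Equiv.symm_apply_apply]⟩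

end Aux

open GS in
/-- Woman-pessimality: no woman strictly prefers her Gale-Shapley partner to her
partner in any stable matching `ν`. -/
theorem gale_shapley_woman_pessimal (n : ℕ) (I : GS.Instance n)
    (μ : Fin n ≃ Fin n) (hμ : IsGSMatching I μ)
    (ν : Fin n ≃ Fin n) (hν : Stable I ν) (w : Fin n) :
    ¬ prefers (I.wpref w) (μ.symm w) (ν.symm w) := by
  obtain ⟨T, hT, hM⟩ := hμ
  intro h
  set m := μ.symm w with hm
  have hμm : μ m = w := Equiv.apply_symm_apply μ w
  have hνne : ν m ≠ w := by
    intro he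
    have : ν.symm w = m := by rw [← he, Equiv.symm_apply_apply]
    rw [GS.prefers, hm, this] at h
    exact lt_irrefl _ h
  have hprop : proposals I (nights I T) m = {μ m} := hM m
  have htop : μ m ∈ GS.topk (I.mpref m) 1 (nights I T m) := by
    have : μ m ∈ proposals I (nights I T) m := by rw [hprop]; exact Finset.mem_singleton_self _
    exact this
  rw [mem_topk_one] at htop
  have hbest := htop.2 (ν m) (gs_invariant I ν hν T m)
  have hmlt : I.mpref m w < I.mpref m (ν m) := by
    rw [← hμm]
    rcases lt_or_eq_of_le (not_lt.mp hbest) with h' | h'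
    · exact h'
    · exact absurd (I.mprefInj m h'.symm) (by rw [hμm]; exact hνne)
  exact hν ⟨m, w, hνne, hmlt, h⟩
end

section
/- Suppose a subset L of women declare false preferences, and let the 'original matching' O be the men-proposing Gale-Shapley outcome under true preferences and the 'new matching' N the outcome when women in L use their false preferences (everyone else truthful). If no woman in L is worse-off (i.e., no liar truly prefers O(her) to N(her)), then no woman at all is worse-off under N. -/
-- Auxiliary lemmas
namespace GS

variable {n : ℕ} (I : Instance n)

lemma mem_topk1 {α : Type*} [DecidableEq α] {rank : α → ℕ} {S : Finset α} {a : α} :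
    a ∈ topk rank 1 S ↔ a ∈ S ∧ ∀ b ∈ S, ¬ rank b < rank a := by
  unfold topk
  simp [Nat.lt_one_iff, Finset.card_eq_zero, Finset.filter_eq_empty_iff]

lemma exists_top {α : Type*} [DecidableEq α] {rank : α → ℕ} {S : Finset α}
    (hS : S.Nonempty) : ∃ a ∈ topk rank 1 S, ∀ b ∈ S, rank a ≤ rank b := by
  obtain ⟨a, ha, hmin⟩ := S.exists_min_image rank hS
  exact ⟨a, mem_topk1.2 ⟨ha, fun b hb => not_lt.2 (hmin b hb)⟩, hmin⟩

lemma nights_zero (m : Fin n) : nights I 0 m = Finset.univ := rfl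

lemma nights_succ (t : ℕ) : nights I (t + 1) = step I (nights I t) :=
  Function.iterate_succ_apply' _ _ _

lemma nights_mono {s t : ℕ} (h : s ≤ t) (m : Fin n) : nights I t m ⊆ nights I s m := by
  induction t with
  | zero =>
    have : s = 0 := by omega
    subst this; exact Finset.Subset.refl _
  | succ t ih =>
    rcases Nat.lt_or_ge s (t+1) with hl | hg
    · have : nights I (t+1) m ⊆ nights I t m := by
        rw [nights_succ]; exact Finset.filter_subset _ _
      exact this.trans (ih (by omega))
    · have : s = t + 1 := by omega
      subst this; exact Finset.Subset.refl _

lemma nights_stopped {T : ℕ} (h : Stopped I T) {t : ℕ} (ht : T ≤ t) :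
    nights I t = nights I T := by
  induction t with
  | zero =>
    have : T = 0 := by omega
    rw [this]
  | succ t ih =>
    rcases Nat.lt_or_ge T (t+1) with hl | hg
    · rw [nights_succ, ih (by omega), h]
    · have : T = t + 1 := by omega
      rw [this]

lemma mem_proposersOf_iff {A : Fin n → Finset (Fin n)} {m w : Fin n} :
    m ∈ proposersOf I A w ↔ w ∈ proposals I A m := by
  simp [proposersOf]

lemma rejectedBy_sub {A : Fin n → Finset (Fin n)} {m w : Fin n}
    (h : m ∈ rejectedBy I A w) : w ∈ A m := by
  have : m ∈ proposersOf I A w := (Finset.mem_sdiff.1 h).1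
  have := (mem_proposersOf_iff I).1 this
  exact (mem_topk1.1 this).1

lemma dropped_iff {t : ℕ} {m w : Fin n} :
    w ∈ nights I t m ∧ w ∉ nights I (t + 1) m ↔
      m ∈ rejectedBy I (nights I t) w := by
  rw [nights_succ]
  constructor
  · rintro ⟨h1, h2⟩
    by_contra hr
    exact h2 (Finset.mem_filter.2 ⟨h1, hr⟩)
  · intro hr
    refine ⟨rejectedBy_sub I hr, fun hmem => ?_⟩
    exact (Finset.mem_filter.1 hmem).2 hr

lemma rejected_of_drop {m w : Fin n} {s t : ℕ} (hst : s ≤ t)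
    (hs : w ∈ nights I s m) (ht : w ∉ nights I t m) :
    ∃ u, s ≤ u ∧ u < t ∧ m ∈ rejectedBy I (nights I u) w := by
  induction t with
  | zero =>
    have : s = 0 := by omega
    subst this; exact absurd hs ht
  | succ t ih =>
    rcases Nat.lt_or_ge s (t+1) with hl | hg
    · by_cases hw : w ∈ nights I t m
      · exact ⟨t, by omega, by omega, (dropped_iff I).1 ⟨hw, ht⟩⟩
      · obtain ⟨u, h1, h2, h3⟩ := ih (by omega) hw
        exact ⟨u, h1, by omega, h3⟩
    · have : s = t + 1 := by omega
      subst this; exact absurd hs ht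

lemma no_reject_of_stopped {T : ℕ} (h : Stopped I T) (w : Fin n) :
    rejectedBy I (nights I T) w = ∅ := by
  by_contra hne
  obtain ⟨m, hm⟩ := Finset.nonempty_iff_ne_empty.2 hne
  have h1 := rejectedBy_sub I hm
  have h2 : w ∉ step I (nights I T) m := fun hmem => (Finset.mem_filter.1 hmem).2 hm
  rw [h] at h2
  exact h2 h1

lemma reject_lt_stop {T t : ℕ} (h : Stopped I T) {m w : Fin n}
    (hr : m ∈ rejectedBy I (nights I t) w) : t < T := by
  by_contra hge
  rw [nights_stopped I h (by omega)] at hr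
  rw [no_reject_of_stopped I h w] at hr
  exact absurd hr (Finset.notMem_empty m)

lemma top_persists {t : ℕ} {w m : Fin n}
    (hm : m ∈ topk (I.wpref w) 1 (proposersOf I (nights I t) w)) :
    m ∈ proposersOf I (nights I (t + 1)) w := by
  have hp : m ∈ proposersOf I (nights I t) w := (mem_topk1.1 hm).1
  have hprop : w ∈ proposals I (nights I t) m := (mem_proposersOf_iff I).1 hp
  have hwA : w ∈ nights I t m := (mem_topk1.1 hprop).1
  have hnr : m ∉ rejectedBy I (nights I t) w := fun hr => (Finset.mem_sdiff.1 hr).2 hm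
  have hw1 : w ∈ nights I (t+1) m := by
    rw [nights_succ]; exact Finset.mem_filter.2 ⟨hwA, hnr⟩
  refine (mem_proposersOf_iff I).2 (mem_topk1.2 ⟨hw1, fun v hv => ?_⟩)
  exact (mem_topk1.1 hprop).2 v (nights_mono I (Nat.le_succ t) m hv)

lemma top_improves {s t : ℕ} (hst : s ≤ t) {w m : Fin n}
    (hm : m ∈ topk (I.wpref w) 1 (proposersOf I (nights I s) w)) :
    ∃ q ∈ proposersOf I (nights I t) w, I.wpref w q ≤ I.wpref w m := by
  induction t with
  | zero =>
    have : s = 0 := by omega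
    subst this; exact ⟨m, (mem_topk1.1 hm).1, le_refl _⟩
  | succ t ih =>
    rcases Nat.lt_or_ge s (t+1) with hl | hg
    · obtain ⟨q, hq, hle⟩ := ih (by omega)
      obtain ⟨p, hp, hpmin⟩ := exists_top (rank := I.wpref w) ⟨q, hq⟩
      exact ⟨p, top_persists I hp, le_trans (hpmin q hq) hle⟩
    · have : s = t + 1 := by omega
      subst this; exact ⟨m, (mem_topk1.1 hm).1, le_refl _⟩

lemma reject_exists_better {A : Fin n → Finset (Fin n)} {w m : Fin n}
    (h : m ∈ rejectedBy I A w) :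
    ∃ p ∈ topk (I.wpref w) 1 (proposersOf I A w), I.wpref w p < I.wpref w m := by
  obtain ⟨hp, hnt⟩ := Finset.mem_sdiff.1 h
  have hne : (proposersOf I A w).Nonempty := ⟨m, hp⟩
  obtain ⟨p, hptop, hpmin⟩ := exists_top (rank := I.wpref w) hne
  refine ⟨p, hptop, ?_⟩
  rcases lt_or_eq_of_le (hpmin m hp) with h | h
  · exact h
  · exfalso
    have : p = m := I.wprefInj w h
    exact hnt (this ▸ hptop)

set_option linter.unusedSectionVars false
section Run

variable {I} {T : ℕ} {μ : Fin n ≃ Fin n}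
variable (hstop : Stopped I T) (hmatch : MatchesAt I T μ)

include hstop hmatch

lemma proposersOf_final (w : Fin n) :
    proposersOf I (nights I T) w = {μ.symm w} := by
  ext m
  rw [mem_proposersOf_iff, hmatch m, Finset.mem_singleton, Finset.mem_singleton]
  constructor
  · intro h; rw [h]; simp
  · intro h; rw [h]; simp

lemma final_le_of_reject {s : ℕ} {w m : Fin n}
    (h : m ∈ rejectedBy I (nights I s) w) :
    I.wpref w (μ.symm w) < I.wpref w m := by
  obtain ⟨p, hptop, hplt⟩ := reject_exists_better I h
  obtain ⟨q, hq, hqle⟩ := top_improves I (le_of_lt (reject_lt_stop I hstop h)) hptop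
  rw [proposersOf_final hstop hmatch w, Finset.mem_singleton] at hq
  subst hq
  exact lt_of_le_of_lt hqle hplt

lemma partner_mem (m : Fin n) : μ m ∈ nights I T m := by
  have : μ m ∈ proposals I (nights I T) m := by rw [hmatch m]; simp
  exact (mem_topk1.1 this).1

lemma partner_min {m : Fin n} {v : Fin n} (hv : v ∈ nights I T m) :
    I.mpref m (μ m) ≤ I.mpref m v := by
  have : μ m ∈ proposals I (nights I T) m := by rw [hmatch m]; simp
  exact not_lt.1 ((mem_topk1.1 this).2 v hv)

lemma rejected_somewhen {m w : Fin n} (hw : I.mpref m w < I.mpref m (μ m)) :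
    ∃ u, u < T ∧ m ∈ rejectedBy I (nights I u) w := by
  have hnotT : w ∉ nights I T m := fun hmem => absurd (partner_min hstop hmatch hmem) (by omega)
  have h0 : w ∈ nights I 0 m := by rw [nights_zero]; exact Finset.mem_univ w
  obtain ⟨u, _, hu2, hu3⟩ := rejected_of_drop I (Nat.zero_le T) h0 hnotT
  exact ⟨u, hu2, hu3⟩

end Run

lemma stable_of_isGS {I : Instance n} {μ : Fin n ≃ Fin n} (h : IsGSMatching I μ) :
    Stable I μ := by
  obtain ⟨T, hstop, hmatch⟩ := h
  rintro ⟨m, w, hne, hm, hw⟩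
  obtain ⟨u, _, hu⟩ := rejected_somewhen hstop hmatch hm
  have := final_le_of_reject hstop hmatch hu
  omega

end GS

set_option maxHeartbeats 2000000 in
open GS in
/-- If the lying women `L` are all not worse-off (under their true preferences),
then no woman at all is worse-off under the new matching. -/
theorem no_liar_worse_off_implies_no_woman_worse_off (n : ℕ) (I : GS.Instance n)
    (L : Finset (Fin n)) (f : Fin n → Fin n → ℕ) (hf : ∀ w, Function.Injective (f w))
    (O N : Fin n ≃ Fin n)
    (hO : IsGSMatching I O) (hN : IsGSMatching (liarInstance I L f hf) N)
    (hliars : ∀ w ∈ L, ¬ prefers (I.wpref w) (O.symm w) (N.symm w)) :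
    ∀ w, ¬ prefers (I.wpref w) (O.symm w) (N.symm w) := by
  classical
  obtain ⟨T, hstop, hmatch⟩ := hO
  have hOst : Stable I O := stable_of_isGS ⟨T, hstop, hmatch⟩
  have hNst : Stable (liarInstance I L f hf) N := stable_of_isGS hN
  have hJw : ∀ w ∉ L, (liarInstance I L f hf).wpref w = I.wpref w := by
    intro w hw; simp [liarInstance, hw]
  -- Step A : no liar is matched by N to a man in M'
  have hWL : ∀ m', I.mpref m' (N m') < I.mpref m' (O m') → N m' ∉ L := by
    intro m' hm' hL
    have h1 := hliars (N m') hL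
    unfold prefers at h1
    rw [Equiv.symm_apply_apply] at h1
    have hne : O m' ≠ N m' := fun h => by rw [h] at hm'; omega
    have hne2 : O.symm (N m') ≠ m' := fun h =>
      hne ((congrArg O h).symm.trans (O.apply_symm_apply (N m')))
    have hlt : I.wpref (N m') m' < I.wpref (N m') (O.symm (N m')) := by
      rcases lt_or_eq_of_le (not_lt.1 h1) with h | h
      · exact h
      · exact absurd (I.wprefInj (N m') h.symm) hne2
    exact hOst ⟨m', N m', hne, hm', hlt⟩
  -- Step 1 : no man strictly prefers N to O
  have hM' : ∀ m, ¬ I.mpref m (N m) < I.mpref m (O m) := by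
    by_contra hc
    push_neg at hc
    obtain ⟨m₀, hm₀⟩ := hc
    set M' : Finset (Fin n) := Finset.univ.filter (fun m => I.mpref m (N m) < I.mpref m (O m))
      with hM'def
    have hMiff : ∀ m, m ∈ M' ↔ I.mpref m (N m) < I.mpref m (O m) := by
      intro m; simp [hM'def]
    have hm₀M : m₀ ∈ M' := (hMiff m₀).2 hm₀
    have f1 : ∀ m' ∈ M', ∃ u, u < T ∧ m' ∈ rejectedBy I (nights I u) (N m') := by
      intro m' hm'
      exact rejected_somewhen hstop hmatch ((hMiff m').1 hm')
    by_cases hB : ∀ m' ∈ M', O.symm (N m') ∈ M'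
    · -- Case B : O⁻¹(N(M')) ⊆ M'
      have hOW : ∀ m' ∈ M', ∃ m'' ∈ M', N m'' = O m' := by
        intro m' hm'
        have hsub : M'.image N ⊆ M'.image O := by
          intro w hw
          obtain ⟨a, ha, rfl⟩ := Finset.mem_image.1 hw
          exact Finset.mem_image.2 ⟨O.symm (N a), hB a ha, Equiv.apply_symm_apply _ _⟩
        have hcard : (M'.image O).card ≤ (M'.image N).card := by
          rw [Finset.card_image_of_injective _ O.injective,
            Finset.card_image_of_injective _ N.injective]
        have heq := Finset.eq_of_subset_of_card_le hsub hcard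
        have : O m' ∈ M'.image N := by rw [heq]; exact Finset.mem_image_of_mem O hm'
        obtain ⟨m'', h1, h2⟩ := Finset.mem_image.1 this
        exact ⟨m'', h1, h2⟩
      set Rw : Fin n → Finset ℕ :=
        fun w => (Finset.range T).filter (fun t => ∃ m' ∈ M', m' ∈ rejectedBy I (nights I t) w)
        with hRwdef
      set r : Fin n → ℕ := fun w => (Rw w).sup id with hrdef
      have hRwiff : ∀ w t, t ∈ Rw w ↔ t < T ∧ ∃ m' ∈ M', m' ∈ rejectedBy I (nights I t) w := by
        intro w t; simp [hRwdef]
      have hRne : ∀ m' ∈ M', (Rw (N m')).Nonempty := by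
        intro m' hm'
        obtain ⟨u, hu1, hu2⟩ := f1 m' hm'
        exact ⟨u, (hRwiff _ u).2 ⟨hu1, m', hm', hu2⟩⟩
      have hrmem : ∀ w, (Rw w).Nonempty → r w ∈ Rw w := by
        intro w hne
        obtain ⟨b, hb, hbe⟩ := Finset.exists_mem_eq_sup (Rw w) hne id
        show (Rw w).sup id ∈ Rw w
        rw [hbe]; exact hb
      have hrmax : ∀ w t, t ∈ Rw w → t ≤ r w := fun w t ht => Finset.le_sup (f := id) ht
      have f3 : ∀ w, (Rw w).Nonempty →
          ∃ mw ∈ topk (I.wpref w) 1 (proposersOf I (nights I (r w)) w), True := by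
        intro w hne
        obtain ⟨-, m', hm'M, hm'rej⟩ := (hRwiff w (r w)).1 (hrmem w hne)
        obtain ⟨p, hp, -⟩ :=
          exists_top (rank := I.wpref w) ⟨m', (Finset.mem_sdiff.1 hm'rej).1⟩
        exact ⟨p, hp, trivial⟩
      have f4 : ∀ w mw, (Rw w).Nonempty →
          mw ∈ topk (I.wpref w) 1 (proposersOf I (nights I (r w)) w) → mw ∈ M' → O mw = w := by
        intro w mw hne htop hmw
        by_contra hOne
        have hprop : w ∈ proposals I (nights I (r w)) mw :=
          (mem_proposersOf_iff I).1 (mem_topk1.1 htop).1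
        have hwmem : w ∈ nights I (r w) mw := (mem_topk1.1 hprop).1
        have hrT : r w < T := ((hRwiff w (r w)).1 (hrmem w hne)).1
        have hOmem : O mw ∈ nights I (r w) mw :=
          nights_mono I (le_of_lt hrT) mw (partner_mem hstop hmatch mw)
        have hle : I.mpref mw w ≤ I.mpref mw (O mw) :=
          not_lt.1 ((mem_topk1.1 hprop).2 _ hOmem)
        have hlt : I.mpref mw w < I.mpref mw (O mw) :=
          lt_of_le_of_ne hle (fun h => hOne (I.mprefInj mw h).symm)
        have hnotT : w ∉ nights I T mw := fun hmem => by
          have := partner_min hstop hmatch hmem; omega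
        obtain ⟨u, hu1, hu2, hu3⟩ := rejected_of_drop I (le_of_lt hrT) hwmem hnotT
        have huR : u ∈ Rw w := (hRwiff w u).2 ⟨hu2, mw, hmw, hu3⟩
        have hueq : u = r w := le_antisymm (hrmax w u huR) hu1
        rw [hueq] at hu3
        exact (Finset.mem_sdiff.1 hu3).2 htop
      by_cases hB1 : ∃ w ∈ M'.image N, ∃ mw,
          mw ∈ topk (I.wpref w) 1 (proposersOf I (nights I (r w)) w) ∧ mw ∉ M'
      · -- Case B1 : some relevant woman's top proposer is outside M' : blocking pair
        obtain ⟨w, hwW, mw, htop, hmwnot⟩ := hB1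
        obtain ⟨m', hm'M, hm'w⟩ := Finset.mem_image.1 hwW
        have hRneW : (Rw w).Nonempty := hm'w ▸ hRne m' hm'M
        have hwL : w ∉ L := hm'w ▸ hWL m' ((hMiff m').1 hm'M)
        have hNsymm : N.symm w = m' := by rw [← hm'w, Equiv.symm_apply_apply]
        have hmne : mw ≠ m' := fun h => hmwnot (h ▸ hm'M)
        have hNmw : N mw ≠ w := fun h => hmne (N.injective (h.trans hm'w.symm))
        -- woman side
        obtain ⟨u, hu1, hu2⟩ := f1 m' hm'M
        rw [hm'w] at hu2
        have huR : u ∈ Rw w := (hRwiff w u).2 ⟨hu1, m', hm'M, hu2⟩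
        obtain ⟨p, hptop, hplt⟩ := reject_exists_better I hu2
        obtain ⟨q, hq, hqle⟩ := top_improves I (hrmax w u huR) hptop
        have hmwq : I.wpref w mw ≤ I.wpref w q := not_lt.1 ((mem_topk1.1 htop).2 q hq)
        have hwside : I.wpref w mw < I.wpref w (N.symm w) := by
          rw [hNsymm]; omega
        -- man side
        have hrT : r w < T := ((hRwiff w (r w)).1 (hrmem w hRneW)).1
        have hprop : w ∈ proposals I (nights I (r w)) mw :=
          (mem_proposersOf_iff I).1 (mem_topk1.1 htop).1
        have hOmem : O mw ∈ nights I (r w) mw :=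
          nights_mono I (le_of_lt hrT) mw (partner_mem hstop hmatch mw)
        have h1 : I.mpref mw w ≤ I.mpref mw (O mw) :=
          not_lt.1 ((mem_topk1.1 hprop).2 _ hOmem)
        have h2 : I.mpref mw (O mw) ≤ I.mpref mw (N mw) := not_lt.1 ((hMiff mw).not.1 hmwnot)
        have hmside : I.mpref mw w < I.mpref mw (N mw) :=
          lt_of_le_of_ne (le_trans h1 h2) (fun h => hNmw (I.mprefInj mw h).symm)
        refine hNst ⟨mw, w, hNmw, hmside, ?_⟩
        rw [hJw w hwL]
        exact hwside
      · -- Case B2 : all relevant tops are in M' : contradiction via last rejection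
        push_neg at hB1
        obtain ⟨wstar, hwstarW, hwstarmax⟩ :=
          Finset.exists_max_image (M'.image N) r ⟨N m₀, Finset.mem_image_of_mem N hm₀M⟩
        obtain ⟨ms, hmsM, hws⟩ := Finset.mem_image.1 hwstarW
        have hRne1 : (Rw wstar).Nonempty := hws ▸ hRne ms hmsM
        obtain ⟨-, m₁, hm₁M, hm₁rej⟩ := (hRwiff wstar (r wstar)).1 (hrmem wstar hRne1)
        obtain ⟨mw, hmwtop, -⟩ := f3 wstar hRne1
        have hmwM : mw ∈ M' := hB1 wstar hwstarW mw hmwtop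
        have hOmw : O mw = wstar := f4 wstar mw hRne1 hmwtop hmwM
        have hm₁ne : m₁ ≠ mw := fun h => (Finset.mem_sdiff.1 hm₁rej).2 (h ▸ hmwtop)
        have hune : O m₁ ≠ wstar := fun h => hm₁ne (O.injective (h.trans hOmw.symm))
        obtain ⟨m₂, hm₂M, hm₂⟩ := hOW m₁ hm₁M
        have huW : O m₁ ∈ M'.image N := Finset.mem_image.2 ⟨m₂, hm₂M, hm₂⟩
        have hRneu : (Rw (O m₁)).Nonempty := hm₂ ▸ hRne m₂ hm₂M
        obtain ⟨mu, hmutop, -⟩ := f3 (O m₁) hRneu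
        have hmuM : mu ∈ M' := hB1 (O m₁) huW mu hmutop
        have hOmu : O mu = O m₁ := f4 (O m₁) mu hRneu hmutop hmuM
        have hmu_eq : mu = m₁ := O.injective hOmu
        rw [hmu_eq] at hmutop
        have hpropu : O m₁ ∈ proposals I (nights I (r (O m₁))) m₁ :=
          (mem_proposersOf_iff I).1 (mem_topk1.1 hmutop).1
        have hpropw : wstar ∈ proposals I (nights I (r wstar)) m₁ :=
          (mem_proposersOf_iff I).1 (Finset.mem_sdiff.1 hm₁rej).1
        have hrwT : r wstar < T := reject_lt_stop I hstop hm₁rej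
        have huavail : O m₁ ∈ nights I (r wstar) m₁ :=
          nights_mono I (le_of_lt hrwT) m₁ (partner_mem hstop hmatch m₁)
        have h1 : I.mpref m₁ wstar ≤ I.mpref m₁ (O m₁) :=
          not_lt.1 ((mem_topk1.1 hpropw).2 _ huavail)
        have h1' : I.mpref m₁ wstar < I.mpref m₁ (O m₁) :=
          lt_of_le_of_ne h1 (fun h => hune (I.mprefInj m₁ h).symm)
        have hru_le : r (O m₁) ≤ r wstar := hwstarmax (O m₁) huW
        have hwavail : wstar ∈ nights I (r (O m₁)) m₁ :=
          nights_mono I hru_le m₁ (mem_topk1.1 hpropw).1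
        have h2 : I.mpref m₁ (O m₁) ≤ I.mpref m₁ wstar :=
          not_lt.1 ((mem_topk1.1 hpropu).2 _ hwavail)
        omega
    · -- Case A : some O⁻¹(N m') is not in M' : blocking pair for N
      push_neg at hB
      obtain ⟨m', hm'M, hm'not⟩ := hB
      set w := N m' with hwdef
      set m := O.symm w with hmdef
      have hm'lt : I.mpref m' (N m') < I.mpref m' (O m') := (hMiff m').1 hm'M
      have hwL : w ∉ L := hWL m' hm'lt
      have hmm' : m ≠ m' := fun h => hm'not (h ▸ hm'M)
      have hNm : N m ≠ w := fun h => hmm' (N.injective (h.trans hwdef))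
      have hOm : O m = w := Equiv.apply_symm_apply O w
      have h1 : I.mpref m (O m) ≤ I.mpref m (N m) := not_lt.1 ((hMiff m).not.1 hm'not)
      have hmside : I.mpref m w < I.mpref m (N m) := by
        rw [hOm] at h1
        exact lt_of_le_of_ne h1 (fun h => hNm (I.mprefInj m h).symm)
      obtain ⟨u, hu1, hu2⟩ := f1 m' hm'M
      have hwside : I.wpref w m < I.wpref w (N.symm w) := by
        have := final_le_of_reject hstop hmatch hu2
        have hNsymm : N.symm w = m' := by rw [hwdef, Equiv.symm_apply_apply]
        rw [hNsymm]
        exact this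
      refine hNst ⟨m, w, hNm, hmside, ?_⟩
      rw [hJw w hwL]
      exact hwside
  -- Step 2 : conclude for all women
  intro w hpref
  unfold prefers at hpref
  by_cases hwL : w ∈ L
  · exact hliars w hwL hpref
  · have hm := hM' (O.symm w)
    rw [Equiv.apply_symm_apply] at hm
    have hne : N (O.symm w) ≠ w := by
      intro h
      have h2 : O.symm w = N.symm w :=
        (N.symm_apply_apply (O.symm w)).symm.trans (congrArg N.symm h)
      rw [h2] at hpref; omega
    have hlt : I.mpref (O.symm w) w < I.mpref (O.symm w) (N (O.symm w)) :=
      lt_of_le_of_ne (not_lt.1 hm) (fun h => hne (I.mprefInj _ h).symm)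
    refine hNst ⟨O.symm w, w, hne, hlt, ?_⟩
    rw [hJw w hwL]
    exact hpref
end
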